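/- For z in the open left half-plane {z ∈ ℂ : Re z < 0}, the series G(z) = Σ_{j≥0} 2^{−j} e^{2^j z} converges, defines a holomorphic function there satisfying the bound |G(z)| ≤ 2 for all z with Re z < 0, and obeys the functional equation G(2z) = 2G(z) − 2e^z for all z with Re z < 0. -/

import Mathlib

lemma stmt16_key (j : ℕ) {z : ℂ} (hz : z.re < 0) :
    ‖Complex.exp ((2:ℂ)^j * z) / 2^j‖ ≤ (1/2:ℝ)^j := by
  rw [norm_div, Complex.norm_exp]
  have h1 : ((2:ℂ)^j * z).re = (2:ℝ)^j * z.re := by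
    rw [show (2:ℂ)^j = (((2:ℝ)^j : ℝ) : ℂ) by push_cast; ring, Complex.re_ofReal_mul]
  have h2 : ‖(2:ℂ)^j‖ = (2:ℝ)^j := by simp
  rw [h1, h2, div_pow, one_pow]
  have : Real.exp ((2:ℝ)^j * z.re) ≤ 1 :=
    Real.exp_le_one_iff.mpr (by nlinarith [pow_pos (two_pos (α:=ℝ)) j])
  exact div_le_div_of_nonneg_right this (by positivity)

lemma stmt16_summable {z : ℂ} (hz : z.re < 0) :
    Summable (fun j : ℕ => Complex.exp ((2 : ℂ) ^ j * z) / 2 ^ j) := by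
  apply Summable.of_norm
  exact Summable.of_nonneg_of_le (fun j => norm_nonneg _) (fun j => stmt16_key j hz)
    (summable_geometric_of_lt_one (by norm_num) (by norm_num))

/-- on the open left half-plane `{Re z < 0}`, the series
`G(z) = Σ_{j≥0} 2^{-j} e^{2^j z}` converges, defines a holomorphic function with
`|G(z)| ≤ 2`, and satisfies `G(2z) = 2G(z) - 2e^z`. -/
theorem stmt16 (G : ℂ → ℂ)
    (hG : ∀ z : ℂ, z.re < 0 →
      G z = ∑' j : ℕ, Complex.exp ((2 : ℂ) ^ j * z) / 2 ^ j) :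
    (∀ z : ℂ, z.re < 0 →
      Summable (fun j : ℕ => Complex.exp ((2 : ℂ) ^ j * z) / 2 ^ j)) ∧
    DifferentiableOn ℂ G {z : ℂ | z.re < 0} ∧
    (∀ z : ℂ, z.re < 0 → ‖G z‖ ≤ 2) ∧
    ∀ z : ℂ, z.re < 0 → G (2 * z) = 2 * G z - 2 * Complex.exp z := by
  have hsum : Summable (fun j : ℕ => (1/2:ℝ)^j) :=
    summable_geometric_of_lt_one (by norm_num) (by norm_num)
  refine ⟨fun z hz => stmt16_summable hz, ?_, ?_, ?_⟩
  · -- differentiability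
    have hopen : IsOpen {z : ℂ | z.re < 0} := isOpen_lt Complex.continuous_re continuous_const
    have hmain : DifferentiableOn ℂ
        (fun z : ℂ => ∑' j : ℕ, Complex.exp ((2 : ℂ) ^ j * z) / 2 ^ j) {z : ℂ | z.re < 0} := by
      have htu : TendstoUniformlyOn
          (fun (N : ℕ) (z : ℂ) => ∑ j ∈ Finset.range N, Complex.exp ((2 : ℂ) ^ j * z) / 2 ^ j)
          (fun z : ℂ => ∑' j : ℕ, Complex.exp ((2 : ℂ) ^ j * z) / 2 ^ j)
          Filter.atTop {z : ℂ | z.re < 0} :=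
        tendstoUniformlyOn_tsum_nat hsum (fun j z hz => stmt16_key j hz)
      apply htu.tendstoLocallyUniformlyOn.differentiableOn ?_ hopen
      filter_upwards with N
      apply DifferentiableOn.fun_sum
      intro j _
      apply DifferentiableOn.div_const
      exact ((differentiable_const _).mul differentiable_id).cexp.differentiableOn
    exact hmain.congr (fun z hz => hG z hz)
  · -- bound
    intro z hz
    rw [hG z hz]
    calc ‖∑' j : ℕ, Complex.exp ((2 : ℂ) ^ j * z) / 2 ^ j‖
        ≤ ∑' j : ℕ, ‖Complex.exp ((2 : ℂ) ^ j * z) / 2 ^ j‖ :=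
          norm_tsum_le_tsum_norm (stmt16_summable hz).norm
      _ ≤ ∑' j : ℕ, (1/2:ℝ)^j :=
          Summable.tsum_le_tsum (fun j => stmt16_key j hz) (stmt16_summable hz).norm hsum
      _ = 2 := tsum_geometric_two
  · -- functional equation
    intro z hz
    have h2z : (2 * z).re < 0 := by
      have : (2 * z).re = 2 * z.re := by simp [Complex.mul_re]
      rw [this]; linarith
    rw [hG _ h2z, hG z hz]
    have hterm : ∀ j : ℕ, Complex.exp ((2 : ℂ) ^ j * (2 * z)) / 2 ^ j
        = 2 * (Complex.exp ((2 : ℂ) ^ (j + 1) * z) / 2 ^ (j + 1)) := by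
      intro j
      rw [pow_succ, mul_assoc]
      ring
    have hs := stmt16_summable hz
    calc (∑' j : ℕ, Complex.exp ((2 : ℂ) ^ j * (2 * z)) / 2 ^ j)
        = ∑' j : ℕ, 2 * (Complex.exp ((2 : ℂ) ^ (j + 1) * z) / 2 ^ (j + 1)) := by
          exact tsum_congr hterm
      _ = 2 * ∑' j : ℕ, Complex.exp ((2 : ℂ) ^ (j + 1) * z) / 2 ^ (j + 1) := tsum_mul_left
      _ = 2 * ((∑' j : ℕ, Complex.exp ((2 : ℂ) ^ j * z) / 2 ^ j) - Complex.exp z) := by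
          rw [Summable.tsum_eq_zero_add hs]
          simp only [pow_zero, one_mul, pow_succ]
          ring
      _ = 2 * (∑' j : ℕ, Complex.exp ((2 : ℂ) ^ j * z) / 2 ^ j) - 2 * Complex.exp z := by ring
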